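/- arXiv:2501.12926 — 4 statements merged into one kernel-verified Lean document; each statement's English description precedes it below -/
import Mathlib

section
/- Let u : ℝ → ℝ be concave and strictly increasing, with real payoffs satisfying a_θ > b_θ, b_{θ'} > a_{θ'} (pre-transformation) and â_θ > b̂_θ, b̂_{θ'} > â_{θ'} (post-transformation), where b̂_θ ≤ b_θ, â_{θ'} ≥ a_{θ'}, and (min{â_θ, a_θ} - b̂_θ)/(a_θ - b_θ) ≥ (b̂_{θ'} - â_{θ'})/(min{b̂_{θ'}, b_{θ'}} - a_{θ'}). Define μ_u = (u(a_θ) - u(b_θ))/((u(a_θ) - u(b_θ)) + (u(b_{θ'}) - u(a_{θ'}))) and μ̂_u = (u(â_θ) - u(b̂_θ))/((u(â_θ) - u(b̂_θ)) + (u(b̂_{θ'}) - u(â_{θ'}))). Then μ_u ≤ μ̂_u. -/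
/-- For a concave function, the secant slope is antitone when both endpoints move right. -/
lemma concave_slope_anti (u : ℝ → ℝ) (hu : ConcaveOn ℝ Set.univ u)
    {x1 x2 y1 y2 : ℝ} (hx : x1 ≤ x2) (hy : y1 ≤ y2) (hxy1 : x1 < y1) (hxy2 : x2 < y2) :
    (u y2 - u x2) / (y2 - x2) ≤ (u y1 - u x1) / (y1 - x1) := by
  have hneg : ConvexOn ℝ Set.univ (-u) := hu.neg
  have mem : ∀ z : ℝ, z ∈ (Set.univ : Set ℝ) := fun z => Set.mem_univ z
  -- step 1 : s(x2, y2) ≤ s(x1, y2), secant through a = y2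
  have h1 : (u y2 - u x2) / (y2 - x2) ≤ (u y2 - u x1) / (y2 - x1) := by
    have := hneg.secant_mono (mem y2) (mem x1) (mem x2)
      (ne_of_lt (lt_of_le_of_lt hx hxy2)) (ne_of_lt hxy2) hx
    simp only [Pi.neg_apply] at this
    have e1 : (-u x1 - -u y2) / (x1 - y2) = -((u y2 - u x1) / (y2 - x1)) := by
      rw [show (-u x1 - -u y2) = (u y2 - u x1) by ring,
        show x1 - y2 = -(y2 - x1) by ring, div_neg]
    have e2 : (-u x2 - -u y2) / (x2 - y2) = -((u y2 - u x2) / (y2 - x2)) := by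
      rw [show (-u x2 - -u y2) = (u y2 - u x2) by ring,
        show x2 - y2 = -(y2 - x2) by ring, div_neg]
    rw [e1, e2] at this
    linarith
  -- step 2 : s(x1, y2) ≤ s(x1, y1), secant through a = x1
  have h2 : (u y2 - u x1) / (y2 - x1) ≤ (u y1 - u x1) / (y1 - x1) := by
    have := hneg.secant_mono (mem x1) (mem y1) (mem y2)
      (ne_of_gt hxy1) (ne_of_gt (lt_of_lt_of_le hxy1 hy)) hy
    simp only [Pi.neg_apply] at this
    have e1 : (-u y1 - -u x1) / (y1 - x1) = -((u y1 - u x1) / (y1 - x1)) := by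
      rw [show (-u y1 - -u x1) = -(u y1 - u x1) by ring, neg_div]
    have e2 : (-u y2 - -u x1) / (y2 - x1) = -((u y2 - u x1) / (y2 - x1)) := by
      rw [show (-u y2 - -u x1) = -(u y2 - u x1) by ring, neg_div]
    rw [e1, e2] at this
    linarith
  linarith

/-- Sufficiency direction of Proposition 1 for a fixed pair of states:
if `a` and `b` are made steeper, the indifference belief weakly increases. -/
theorem steeper_increases_indifference_belief (u : ℝ → ℝ)
    (hu : ConcaveOn ℝ Set.univ u) (humono : StrictMono u)
    (a0 b0 a1 b1 ta0 tb0 ta1 tb1 : ℝ)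
    (h1 : a0 > b0) (h2 : b1 > a1) (h3 : ta0 > tb0) (h4 : tb1 > ta1)
    (h5 : tb0 ≤ b0) (h6 : ta1 ≥ a1)
    (h7 : (min ta0 a0 - tb0) / (a0 - b0) ≥ (tb1 - ta1) / (min tb1 b1 - a1)) :
    (u a0 - u b0) / ((u a0 - u b0) + (u b1 - u a1)) ≤
      (u ta0 - u tb0) / ((u ta0 - u tb0) + (u tb1 - u ta1)) := by
  set m0 := min ta0 a0 with hm0
  set m1 := min tb1 b1 with hm1
  have hm0tb0 : tb0 < m0 := lt_min h3 (lt_of_le_of_lt h5 h1)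
  have hm0a0 : m0 ≤ a0 := min_le_right _ _
  have hm0ta0 : m0 ≤ ta0 := min_le_left _ _
  have hm1a1 : a1 < m1 := lt_min (lt_of_le_of_lt h6 h4) h2
  have hm1b1 : m1 ≤ b1 := min_le_right _ _
  have hm1tb1 : m1 ≤ tb1 := min_le_left _ _
  have hX : 0 < u a0 - u b0 := sub_pos.mpr (humono h1)
  have hY : 0 < u b1 - u a1 := sub_pos.mpr (humono h2)
  have hXt : 0 < u ta0 - u tb0 := sub_pos.mpr (humono h3)
  have hYt : 0 < u tb1 - u ta1 := sub_pos.mpr (humono h4)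
  have hA : 0 < u m0 - u tb0 := sub_pos.mpr (humono hm0tb0)
  have hB : 0 < u m1 - u a1 := sub_pos.mpr (humono hm1a1)
  have hAle : u m0 - u tb0 ≤ u ta0 - u tb0 := by
    have := humono.monotone hm0ta0; linarith
  have hBle : u m1 - u a1 ≤ u b1 - u a1 := by
    have := humono.monotone hm1b1; linarith
  -- slope comparisons from concavity
  have sS : (u a0 - u b0) / (a0 - b0) ≤ (u m0 - u tb0) / (m0 - tb0) :=
    concave_slope_anti u hu h5 hm0a0 hm0tb0 h1
  have sT : (u tb1 - u ta1) / (tb1 - ta1) ≤ (u m1 - u a1) / (m1 - a1) :=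
    concave_slope_anti u hu h6 hm1tb1 hm1a1 h4
  have k1 : (u a0 - u b0) * (m0 - tb0) ≤ (u m0 - u tb0) * (a0 - b0) := by
    rw [div_le_div_iff₀ (by linarith) (by linarith)] at sS; linarith
  have k2 : (u tb1 - u ta1) * (m1 - a1) ≤ (u m1 - u a1) * (tb1 - ta1) := by
    rw [div_le_div_iff₀ (by linarith) (by linarith)] at sT; linarith
  have k3 : (tb1 - ta1) * (a0 - b0) ≤ (m0 - tb0) * (m1 - a1) := by
    rw [ge_iff_le, div_le_div_iff₀ (by linarith) (by linarith)] at h7; linarith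
  have keyP : (0:ℝ) < (m0 - tb0) * (m1 - a1) :=
    mul_pos (by linarith) (by linarith)
  have step1 : (u a0 - u b0) * (m0 - tb0) * ((u tb1 - u ta1) * (m1 - a1)) ≤
      (u m0 - u tb0) * (a0 - b0) * ((u m1 - u a1) * (tb1 - ta1)) :=
    mul_le_mul k1 k2 (mul_nonneg (by linarith) (by linarith))
      (mul_nonneg (by linarith) (by linarith))
  have step2 : (u m0 - u tb0) * (u m1 - u a1) * ((tb1 - ta1) * (a0 - b0)) ≤
      (u m0 - u tb0) * (u m1 - u a1) * ((m0 - tb0) * (m1 - a1)) :=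
    mul_le_mul_of_nonneg_left k3 (mul_nonneg (by linarith) (by linarith))
  have step3 : (u m0 - u tb0) * (u m1 - u a1) * ((m0 - tb0) * (m1 - a1)) ≤
      (u ta0 - u tb0) * (u b1 - u a1) * ((m0 - tb0) * (m1 - a1)) := by
    have h := mul_le_mul hAle hBle (le_of_lt hB) (le_of_lt hXt)
    exact mul_le_mul_of_nonneg_right h (le_of_lt keyP)
  have key : (u a0 - u b0) * (u tb1 - u ta1) * ((m0 - tb0) * (m1 - a1)) ≤
      (u ta0 - u tb0) * (u b1 - u a1) * ((m0 - tb0) * (m1 - a1)) := by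
    calc (u a0 - u b0) * (u tb1 - u ta1) * ((m0 - tb0) * (m1 - a1))
        = (u a0 - u b0) * (m0 - tb0) * ((u tb1 - u ta1) * (m1 - a1)) := by ring
      _ ≤ (u m0 - u tb0) * (a0 - b0) * ((u m1 - u a1) * (tb1 - ta1)) := step1
      _ = (u m0 - u tb0) * (u m1 - u a1) * ((tb1 - ta1) * (a0 - b0)) := by ring
      _ ≤ (u m0 - u tb0) * (u m1 - u a1) * ((m0 - tb0) * (m1 - a1)) := step2
      _ ≤ (u ta0 - u tb0) * (u b1 - u a1) * ((m0 - tb0) * (m1 - a1)) := step3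
  have key2 : (u a0 - u b0) * (u tb1 - u ta1) ≤ (u ta0 - u tb0) * (u b1 - u a1) :=
    le_of_mul_le_mul_right key keyP
  rw [div_le_div_iff₀ (by linarith) (by linarith)]
  calc (u a0 - u b0) * ((u ta0 - u tb0) + (u tb1 - u ta1))
      = (u a0 - u b0) * (u ta0 - u tb0) + (u a0 - u b0) * (u tb1 - u ta1) := by ring
    _ ≤ (u a0 - u b0) * (u ta0 - u tb0) + (u ta0 - u tb0) * (u b1 - u a1) := by linarith
    _ = (u ta0 - u tb0) * ((u a0 - u b0) + (u b1 - u a1)) := by ring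
end

section
/- Let ≽ be a complete, transitive binary relation on ℝ^Θ that is strongly monotone (a ≫ b implies a ≻ b) and convex (a ≽ b implies λ·a + (1-λ)·b ≽ b for all λ ∈ [0,1]). Suppose a ≻ b, b ≻ λ·a + (1-λ)·b̂ pointwise-dominantly for some λ ∈ [0,1) (i.e., b ≫ λ·a + (1-λ)·b̂, or b = b̂), and â ≫ γ·a + (1-γ)·b̂ for some γ ∈ [0,1] (or â = a). Then a ≻ b̂ and â ≻ b̂. -/
/-- Proposition 3 (strict part): regular preferences and actions made commonly
steeper: if `a ≻ b` then `a ≻ b̂` and `â ≻ b̂`. -/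
theorem regular_commonly_steeper_strict (Θ : Type*)
    (R : (Θ → ℝ) → (Θ → ℝ) → Prop)
    (hcomplete : ∀ a b, R a b ∨ R b a)
    (htrans : ∀ a b c, R a b → R b c → R a c)
    (hmono : ∀ a b, (∀ θ, a θ > b θ) → R a b ∧ ¬ R b a)
    (hconvex : ∀ a b, R a b → ∀ l : ℝ, 0 ≤ l → l ≤ 1 →
      R (fun θ => l * a θ + (1 - l) * b θ) b)
    (a b ta tb : Θ → ℝ)
    (hab : R a b ∧ ¬ R b a)
    (hbstep : b = tb ∨ ∃ l : ℝ, 0 ≤ l ∧ l < 1 ∧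
      ∀ θ, b θ > l * a θ + (1 - l) * tb θ)
    (hastep : ta = a ∨ ∃ g : ℝ, 0 ≤ g ∧ g ≤ 1 ∧
      ∀ θ, ta θ > g * a θ + (1 - g) * tb θ) :
    (R a tb ∧ ¬ R tb a) ∧ (R ta tb ∧ ¬ R tb ta) := by
  have key : R a tb ∧ ¬ R tb a := by
    rcases hbstep with rfl | ⟨l, hl0, hl1, hdom⟩
    · exact hab
    · have hnot : ¬ R tb a := by
        intro h
        have hmix := hconvex tb a h (1 - l) (by linarith) (by linarith)
        have hdom' : ∀ θ, b θ > (1 - l) * tb θ + (1 - (1 - l)) * a θ := by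
          intro θ; have := hdom θ; linarith
        have hb := (hmono b _ hdom').1
        exact hab.2 (htrans b _ a hb hmix)
      exact ⟨(hcomplete a tb).resolve_right hnot, hnot⟩
  refine ⟨key, ?_⟩
  rcases hastep with rfl | ⟨g, hg0, hg1, hdom⟩
  · exact key
  · have hmix := hconvex a tb key.1 g hg0 hg1
    have hta := hmono ta _ hdom
    refine ⟨htrans ta _ tb hta.1 hmix, ?_⟩
    intro h
    exact hta.2 (htrans _ tb ta hmix h)
end

section
/- Let ≽ be a complete, transitive, strongly monotone, convex preference relation on ℝ^Θ. Suppose a ∼ b (indifference), and (b = b̂ or b ≫ λ·a + (1-λ)·b̂ for some λ ∈ [0,1]), and (â = a or â ≫ γ·a + (1-γ)·b̂ for some γ ∈ [0,1]). Then â ≽ b̂. -/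
/-- Proposition 3 (indifference part): regular preferences and actions made
commonly steeper: if `a ∼ b` then `â ≽ b̂`. -/
theorem regular_commonly_steeper_indiff (Θ : Type*)
    (R : (Θ → ℝ) → (Θ → ℝ) → Prop)
    (hcomplete : ∀ a b, R a b ∨ R b a)
    (htrans : ∀ a b c, R a b → R b c → R a c)
    (hmono : ∀ a b, (∀ θ, a θ > b θ) → R a b ∧ ¬ R b a)
    (hconvex : ∀ a b, R a b → ∀ l : ℝ, 0 ≤ l → l ≤ 1 →
      R (fun θ => l * a θ + (1 - l) * b θ) b)
    (a b ta tb : Θ → ℝ)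
    (hab : R a b ∧ R b a)
    (hbstep : b = tb ∨ ∃ l : ℝ, 0 ≤ l ∧ l ≤ 1 ∧
      ∀ θ, b θ > l * a θ + (1 - l) * tb θ)
    (hastep : ta = a ∨ ∃ g : ℝ, 0 ≤ g ∧ g ≤ 1 ∧
      ∀ θ, ta θ > g * a θ + (1 - g) * tb θ) :
    R ta tb := by
  have hatb : R a tb := by
    rcases hbstep with h | ⟨l, hl0, hl1, hlt⟩
    · exact h ▸ hab.1
    · by_contra hna
      rcases hcomplete a tb with h | h
      · exact hna h
      · have hc := hconvex tb a h (1 - l) (by linarith) (by linarith)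
        have heq : (fun θ => (1 - l) * tb θ + (1 - (1 - l)) * a θ)
            = (fun θ => l * a θ + (1 - l) * tb θ) := by
          funext θ; ring
        rw [heq] at hc
        exact (hmono b _ hlt).2 (htrans _ _ _ hc hab.1)
  rcases hastep with h | ⟨g, hg0, hg1, hgt⟩
  · exact h ▸ hatb
  · exact htrans _ _ _ (hmono ta _ hgt).1 (hconvex a tb hatb g hg0 hg1)
end

section
/- Fix reals with a_θ > b_θ, b_{θ'} > a_{θ'}, â_θ > b̂_θ, b̂_{θ'} > â_{θ'}, and suppose â_{θ'} < a_{θ'}. Define for ι ∈ (0,1) the utility u_ι(x) = x for x ≤ a_{θ'} and u_ι(x) = ι·x + (1-ι)·a_{θ'} for x > a_{θ'}. Suppose b_θ < a_θ ≤ a_{θ'} and b̂_θ < â_θ ≤ â_{θ'} < a_{θ'} < min{b_{θ'}, b̂_{θ'}}. Then for all sufficiently small ι > 0, the pre-transformation indifference belief (a_θ - b_θ)/((a_θ - b_θ) + ι·(b_{θ'} - a_{θ'})) strictly exceeds the post-transformation indifference belief (â_θ - b̂_θ)/((â_θ - b̂_θ) + (u_ι(b̂_{θ'}) - â_{θ'})).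 -/
/-- Case 2 of the necessity direction of Proposition 1: if the good-state payoff
of the low action strictly decreases, the kinked utility with kink at `a1` makes
the pre-transformation indifference belief exceed the post one for small `ι`. -/
theorem case2_kinked_utility (a0 b0 a1 b1 ta0 tb0 ta1 tb1 : ℝ)
    (h1 : a0 > b0) (h2 : b1 > a1) (h3 : ta0 > tb0) (h4 : tb1 > ta1)
    (h5 : ta1 < a1)
    (h6 : b0 < a0) (h7 : a0 ≤ a1)
    (h8 : tb0 < ta0) (h9 : ta0 ≤ ta1)
    (h10 : a1 < min b1 tb1) :
    ∃ ι₀ : ℝ, 0 < ι₀ ∧ ι₀ ≤ 1 ∧ ∀ ι : ℝ, 0 < ι → ι < ι₀ →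
      (fun u : ℝ → ℝ =>
        (a0 - b0) / ((a0 - b0) + ι * (b1 - a1)) >
          (ta0 - tb0) / ((ta0 - tb0) + (u tb1 - ta1)))
        (fun x => if x ≤ a1 then x else ι * x + (1 - ι) * a1) := by
  have hA : (0:ℝ) < a0 - b0 := by linarith
  have hB : (0:ℝ) < b1 - a1 := by simp at h10; linarith [h10.1]
  have hC : (0:ℝ) < ta0 - tb0 := by linarith
  have hE : (0:ℝ) < a1 - ta1 := by linarith
  have htb1 : a1 < tb1 := by simp at h10; exact h10.2
  refine ⟨min 1 ((a0 - b0) * (a1 - ta1) / ((ta0 - tb0) * (b1 - a1))), ?_, min_le_left _ _, ?_⟩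
  · exact lt_min one_pos (div_pos (mul_pos hA hE) (mul_pos hC hB))
  · intro ι hι hιlt
    simp only []
    rw [if_neg (not_le.mpr htb1)]
    have hD : a1 - ta1 ≤ ι * tb1 + (1 - ι) * a1 - ta1 := by nlinarith
    have hden1 : 0 < (a0 - b0) + ι * (b1 - a1) := by positivity
    have hden2 : 0 < (ta0 - tb0) + (ι * tb1 + (1 - ι) * a1 - ta1) := by nlinarith
    rw [gt_iff_lt, div_lt_div_iff₀ hden2 hden1]
    have hkey : ι * ((ta0 - tb0) * (b1 - a1)) < (a0 - b0) * (a1 - ta1) := by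
      have := hιlt.trans_le (min_le_right _ _)
      calc ι * ((ta0 - tb0) * (b1 - a1))
          < (a0 - b0) * (a1 - ta1) / ((ta0 - tb0) * (b1 - a1)) * ((ta0 - tb0) * (b1 - a1)) := by
            exact mul_lt_mul_of_pos_right this (mul_pos hC hB)
        _ = (a0 - b0) * (a1 - ta1) := by field_simp
    nlinarith
end
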